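/- Let Π be a normal logic program with cycles(Π) = {C₁, …, Cₙ}, let U := {λ(C₁), …, λ(Cₙ)} be the set of all unsupported constraints of Π, and let L be a consistent set of literals over Π. Then the inclusion–exclusion identity |SP((Π|L) ∪ U)| = Σ_{i=0}^{n} (−1)^i Σ_{Γ ∈ Λ_i(Π)} |SP(Π|(L ∪ B(Γ)))| holds; in other words, |SP((Π|L) ∪ U)| equals the incremental count a_n^L. -/

import Mathlib

open scoped Classical

/-- A normal logic program rule: head is an atom (`some a`) or ⊥ (`none`),
with positive body `pos` and negative body `neg`. -/
structure ASPRule (V : Type*) where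
  head : Option V
  pos : Finset V
  neg : Finset V

/-- A normal logic program is a finite set of rules. -/
abbrev ASPProgram (V : Type*) := Finset (ASPRule V)

variable {V : Type*}

/-- Atoms occurring in a rule. -/
noncomputable def ruleAtoms (r : ASPRule V) : Finset V :=
  r.head.toFinset ∪ r.pos ∪ r.neg

/-- `at(Π)`: atoms occurring in a program. -/
noncomputable def progAtoms (P : ASPProgram V) : Finset V := P.sup ruleAtoms

/-- The body of rule `r` is satisfied by interpretation `I`:
`B⁺(r) ⊆ I` and `B⁻(r) ∩ I = ∅`. -/
def bodySat (I : Finset V) (r : ASPRule V) : Prop :=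
  r.pos ⊆ I ∧ ∀ a ∈ r.neg, a ∉ I

/-- `I` satisfies rule `r`: whenever the body is satisfied, the head is an
atom belonging to `I` (so a constraint, with head ⊥, is satisfied iff its body is not). -/
def ruleSat (I : Finset V) (r : ASPRule V) : Prop :=
  bodySat I r → ∃ a, r.head = some a ∧ a ∈ I

/-- `I` satisfies every rule of `P`. -/
def satisfiesAll (P : ASPProgram V) (I : Finset V) : Prop := ∀ r ∈ P, ruleSat I r

/-- `I` is a model of `P` (interpretations are subsets of `at(P)`). -/
def isModel (P : ASPProgram V) (I : Finset V) : Prop :=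
  I ⊆ progAtoms P ∧ satisfiesAll P I

/-- `I` is a supported model of `P`: a model in which every atom of `I` has a
supporting rule; equivalently a model of Clark's completion `compl(P)`. -/
def isSupported (P : ASPProgram V) (I : Finset V) : Prop :=
  isModel P I ∧ ∀ a ∈ I, ∃ r ∈ P, r.head = some a ∧ bodySat I r

/-- `SP(P)`: the set of supported models of `P`,
i.e. the models of Clark's completion `compl(P)`. -/
def SP (P : ASPProgram V) : Set (Finset V) := {I | isSupported P I}

/-- The GL-reduct `P^I`. -/
noncomputable def reduct (P : ASPProgram V) (I : Finset V) : ASPProgram V :=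
  (P.filter (fun r => ∀ a ∈ r.neg, a ∉ I)).image
    (fun r => (⟨r.head, r.pos, ∅⟩ : ASPRule V))

/-- `I` is an answer set of `P`: a ⊆-minimal model of the GL-reduct `P^I`. -/
def isAnswerSet (P : ASPProgram V) (I : Finset V) : Prop :=
  I ⊆ progAtoms P ∧ satisfiesAll (reduct P I) I ∧
    ∀ J ⊆ I, satisfiesAll (reduct P I) J → J = I

/-- `AS(P)`: the set of answer sets of `P`. -/
def AS (P : ASPProgram V) : Set (Finset V) := {I | isAnswerSet P I}

/-- A literal: an atom or a negated atom. -/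
inductive ASPLit (V : Type*) where
  | pos (a : V)
  | neg (a : V)

/-- The atom of a literal. -/
def litAtom : ASPLit V → V
  | .pos a => a
  | .neg a => a

/-- Satisfaction of a literal by an interpretation. -/
def litSat (I : Finset V) : ASPLit V → Prop
  | .pos a => a ∈ I
  | .neg a => a ∉ I

/-- `ic(ℓ)`: the constraint whose body is the complementary literal of `ℓ`:
`ic(a) = (⊥ ← ¬ a)` and `ic(¬ a) = (⊥ ← a)`. -/
def ic : ASPLit V → ASPRule V
  | .pos a => ⟨none, ∅, {a}⟩
  | .neg a => ⟨none, {a}, ∅⟩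

/-- `Π|L := Π ∪ {ic(ℓ) : ℓ ∈ L}`. -/
noncomputable def assumeP (P : ASPProgram V) (L : Finset (ASPLit V)) : ASPProgram V :=
  P ∪ L.image ic

/-- `L` is a set of literals over `P`. -/
def litsOver (P : ASPProgram V) (L : Finset (ASPLit V)) : Prop :=
  ∀ ℓ ∈ L, litAtom ℓ ∈ progAtoms P

/-- `L` is consistent: it contains no atom together with its negation. -/
def consistentLits (L : Finset (ASPLit V)) : Prop :=
  ∀ a : V, ¬ (ASPLit.pos a ∈ L ∧ ASPLit.neg a ∈ L)

/-- Edge of the positive dependency digraph `DP(P)`. -/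
def dpEdge (P : ASPProgram V) (a b : V) : Prop :=
  ∃ r ∈ P, a ∈ r.pos ∧ r.head = some b

/-- `C` is the vertex set of a directed cycle of `DP(P)`, i.e. of a nonempty
directed walk whose first and last vertices coincide. -/
def isCycleSet (P : ASPProgram V) (C : Finset V) : Prop :=
  ∃ (v : V) (l : List V),
    List.Chain (dpEdge P) v (l ++ [v]) ∧ (v :: l).toFinset = C

/-- `cycles(P)`: the finite collection of vertex sets of directed cycles of `DP(P)`. -/
noncomputable def cyclesF (P : ASPProgram V) : Finset (Finset V) :=
  (progAtoms P).powerset.filter (isCycleSet P)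

/-- `ES(C)`: the external supports of `C`. -/
noncomputable def extSupport (P : ASPProgram V) (C : Finset V) : Finset V :=
  (progAtoms P).filter (fun a =>
    ∃ r ∈ P, a ∈ r.pos ∧ (∃ h, r.head = some h ∧ h ∈ C) ∧ r.pos ∩ C = ∅)

/-- The unsupported constraint `λ(C) := (⊥, C, ES(C))`. -/
noncomputable def unsupC (P : ASPProgram V) (C : Finset V) : ASPRule V :=
  ⟨none, C, extSupport P C⟩

/-- `Λ_d(P)`: the collection of sets `{λ(C) : C ∈ 𝒞}` for `𝒞 ⊆ cycles(P)` with `|𝒞| = d`. -/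
noncomputable def Lam (P : ASPProgram V) (d : ℕ) : Finset (Finset (ASPRule V)) :=
  ((cyclesF P).powersetCard d).image (fun S => S.image (unsupC P))

/-- `B(Γ)`: the body literals of a set `Γ` of unsupported constraints, read as assumptions. -/
noncomputable def bodyLits (Γ : Finset (ASPRule V)) : Finset (ASPLit V) :=
  Γ.sup (fun r => r.pos.image ASPLit.pos ∪ r.neg.image ASPLit.neg)

/-- The incremental count `a_d^L`. -/
noncomputable def incCount (P : ASPProgram V) (L : Finset (ASPLit V)) (d : ℕ) : ℤ :=
  ∑ i ∈ Finset.range (d + 1), (-1 : ℤ) ^ i *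
    ∑ Γ ∈ Lam P i, ((SP (assumeP P (L ∪ bodyLits Γ))).ncard : ℤ)


/-! ### Auxiliary lemmas -/

section Aux
variable {V : Type*}

lemma ruleSat_none {I : Finset V} {r : ASPRule V} (h : r.head = none) :
    ruleSat I r ↔ ¬ bodySat I r := by
  unfold ruleSat
  simp [h]

lemma ruleSat_ic (I : Finset V) (ℓ : ASPLit V) : ruleSat I (ic ℓ) ↔ litSat I ℓ := by
  cases ℓ with
  | pos a => simp [ic, ruleSat, bodySat, litSat]
  | neg a => simp [ic, ruleSat, bodySat, litSat]

lemma ic_head_none (ℓ : ASPLit V) : (ic ℓ).head = none := by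
  cases ℓ <;> rfl

lemma ruleAtoms_ic (ℓ : ASPLit V) : ruleAtoms (ic ℓ) = {litAtom ℓ} := by
  classical
  cases ℓ <;> simp [ic, ruleAtoms, litAtom, Option.toFinset]

lemma progAtoms_union (P Q : ASPProgram V) :
    progAtoms (P ∪ Q) = progAtoms P ∪ progAtoms Q := by
  classical
  ext a
  simp only [progAtoms, Finset.mem_union, Finset.mem_sup]
  constructor
  · rintro ⟨r, hr | hr, ha⟩
    · exact Or.inl ⟨r, hr, ha⟩
    · exact Or.inr ⟨r, hr, ha⟩
  · rintro (⟨r, hr, ha⟩ | ⟨r, hr, ha⟩)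
    · exact ⟨r, Or.inl hr, ha⟩
    · exact ⟨r, Or.inr hr, ha⟩

lemma progAtoms_subset_assumeP (P : ASPProgram V) (L : Finset (ASPLit V)) :
    progAtoms P ⊆ progAtoms (assumeP P L) := by
  classical
  intro a ha
  obtain ⟨r, hr, h⟩ := Finset.mem_sup.mp ha
  exact Finset.mem_sup.mpr ⟨r, Finset.mem_union_left _ hr, h⟩

lemma cyclesF_subset_atoms {P : ASPProgram V} {C : Finset V} (hC : C ∈ cyclesF P) :
    C ⊆ progAtoms P := by
  classical
  exact Finset.mem_powerset.mp (Finset.mem_filter.mp hC).1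

lemma extSupport_subset_atoms (P : ASPProgram V) (C : Finset V) :
    extSupport P C ⊆ progAtoms P := by
  classical
  exact Finset.filter_subset _ _

/-- Master lemma: adding constraints over the atoms of `Q` to `Q` filters supported
models of `Q` by satisfaction of the constraints. -/
lemma isSupported_union_constraints (Q R : ASPProgram V)
    (hR : ∀ r ∈ R, r.head = none ∧ ruleAtoms r ⊆ progAtoms Q) (I : Finset V) :
    isSupported (Q ∪ R) I ↔ isSupported Q I ∧ ∀ r ∈ R, ruleSat I r := by
  classical
  have hatoms : progAtoms (Q ∪ R) = progAtoms Q := by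
    rw [progAtoms_union]
    exact Finset.union_eq_left.mpr (Finset.sup_le fun r hr => (hR r hr).2)
  constructor
  · rintro ⟨⟨hsub, hsat⟩, hsup⟩
    refine ⟨⟨⟨by rw [← hatoms]; exact hsub, fun r hr => hsat r (Finset.mem_union_left _ hr)⟩, ?_⟩,
      fun r hr => hsat r (Finset.mem_union_right _ hr)⟩
    intro a ha
    obtain ⟨r, hr, hhd, hb⟩ := hsup a ha
    rcases Finset.mem_union.mp hr with h | h
    · exact ⟨r, h, hhd, hb⟩
    · rw [(hR r h).1] at hhd; exact absurd hhd (by simp)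
  · rintro ⟨⟨⟨hsub, hsat⟩, hsup⟩, hRsat⟩
    refine ⟨⟨by rw [hatoms]; exact hsub, fun r hr => ?_⟩, fun a ha => ?_⟩
    · rcases Finset.mem_union.mp hr with h | h
      · exact hsat r h
      · exact hRsat r h
    · obtain ⟨r, h, hhd, hb⟩ := hsup a ha
      exact ⟨r, Finset.mem_union_left _ h, hhd, hb⟩

lemma SP_eq_coe (Q : ASPProgram V) :
    SP Q = ↑((progAtoms Q).powerset.filter (fun I => isSupported Q I)) := by
  classical
  ext I
  simp only [SP, Set.mem_setOf_eq, Finset.coe_filter, Finset.mem_powerset]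
  exact ⟨fun h => ⟨h.1.1, h⟩, fun h => h.2⟩

lemma litSat_bodyLits (P : ASPProgram V) (S : Finset (Finset V)) (I : Finset V) :
    (∀ ℓ ∈ bodyLits (S.image (unsupC P)), litSat I ℓ) ↔
      ∀ C ∈ S, C ⊆ I ∧ ∀ s ∈ extSupport P C, s ∉ I := by
  classical
  unfold bodyLits
  constructor
  · intro h C hC
    constructor
    · intro a ha
      exact h (.pos a) (Finset.mem_sup.mpr ⟨unsupC P C, Finset.mem_image_of_mem _ hC,
        Finset.mem_union_left _ (Finset.mem_image_of_mem _ ha)⟩)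
    · intro s hs
      exact h (.neg s) (Finset.mem_sup.mpr ⟨unsupC P C, Finset.mem_image_of_mem _ hC,
        Finset.mem_union_right _ (Finset.mem_image_of_mem _ hs)⟩)
  · intro h ℓ hℓ
    obtain ⟨r, hr, hℓ2⟩ := Finset.mem_sup.mp hℓ
    obtain ⟨C, hC, rfl⟩ := Finset.mem_image.mp hr
    rcases Finset.mem_union.mp hℓ2 with h1 | h1
    · obtain ⟨a, ha, rfl⟩ := Finset.mem_image.mp h1
      exact (h C hC).1 ha
    · obtain ⟨s, hs, rfl⟩ := Finset.mem_image.mp h1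
      exact (h C hC).2 s hs

lemma bodyLits_atoms {P : ASPProgram V} {S : Finset (Finset V)} (hS : S ⊆ cyclesF P)
    {ℓ : ASPLit V} (hℓ : ℓ ∈ bodyLits (S.image (unsupC P))) :
    litAtom ℓ ∈ progAtoms P := by
  classical
  obtain ⟨r, hr, hℓ2⟩ := Finset.mem_sup.mp hℓ
  obtain ⟨C, hC, rfl⟩ := Finset.mem_image.mp hr
  rcases Finset.mem_union.mp hℓ2 with h1 | h1
  · obtain ⟨a, ha, rfl⟩ := Finset.mem_image.mp h1
    exact cyclesF_subset_atoms (hS hC) ha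
  · obtain ⟨s, hs, rfl⟩ := Finset.mem_image.mp h1
    exact extSupport_subset_atoms P C hs

lemma unsupC_injective (P : ASPProgram V) : Function.Injective (unsupC P) := by
  intro C C' h
  exact congrArg ASPRule.pos h

lemma prod_ite_neg_one {β : Type*} (t : Finset β) (p : β → Prop) [DecidablePred p] :
    ∏ c ∈ t, (if p c then (-1 : ℤ) else 0) =
      (-1 : ℤ) ^ t.card * (if (∀ c ∈ t, p c) then 1 else 0) := by
  classical
  by_cases h : ∀ c ∈ t, p c
  · rw [if_pos h, mul_one, Finset.prod_congr rfl (fun c hc => if_pos (h c hc)),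
      Finset.prod_const]
  · push_neg at h
    obtain ⟨c, hc, hpc⟩ := h
    rw [if_neg (by push_neg; exact ⟨c, hc, hpc⟩), mul_zero]
    exact Finset.prod_eq_zero hc (by rw [if_neg hpc])

lemma incl_excl_card {α β : Type*} (X : Finset α) (A : Finset β)
    (bad : β → α → Prop) [∀ c I, Decidable (bad c I)] :
    ((X.filter (fun I => ∀ c ∈ A, ¬ bad c I)).card : ℤ) =
      ∑ S ∈ A.powerset, (-1 : ℤ) ^ S.card *
        ((X.filter (fun I => ∀ c ∈ S, bad c I)).card : ℤ) := by
  classical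
  have hcard : ∀ (p : α → Prop) (_ : DecidablePred p),
      ((X.filter p).card : ℤ) = ∑ I ∈ X, (if p I then (1 : ℤ) else 0) := by
    intro p hp
    rw [Finset.card_filter]
    push_cast
    rfl
  calc ((X.filter (fun I => ∀ c ∈ A, ¬ bad c I)).card : ℤ)
      = ∑ I ∈ X, (if (∀ c ∈ A, ¬ bad c I) then (1 : ℤ) else 0) := hcard _ _
    _ = ∑ I ∈ X, ∑ S ∈ A.powerset,
          (-1 : ℤ) ^ S.card * (if (∀ c ∈ S, bad c I) then 1 else 0) := by
        refine Finset.sum_congr rfl fun I _ => ?_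
        calc (if (∀ c ∈ A, ¬ bad c I) then (1 : ℤ) else 0)
            = ∏ c ∈ A, (if ¬ bad c I then (1 : ℤ) else 0) := (Finset.prod_boole).symm
          _ = ∏ c ∈ A, ((if bad c I then (-1 : ℤ) else 0) + 1) := by
              refine Finset.prod_congr rfl fun c _ => ?_
              by_cases h : bad c I <;> simp [h]
          _ = ∑ S ∈ A.powerset, (∏ c ∈ S, (if bad c I then (-1 : ℤ) else 0)) *
                ∏ c ∈ A \ S, (1 : ℤ) := Finset.prod_add _ _ _
          _ = ∑ S ∈ A.powerset,
                (-1 : ℤ) ^ S.card * (if (∀ c ∈ S, bad c I) then 1 else 0) := by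
              refine Finset.sum_congr rfl fun S _ => ?_
              rw [Finset.prod_const_one, mul_one, prod_ite_neg_one]
    _ = ∑ S ∈ A.powerset, ∑ I ∈ X,
          (-1 : ℤ) ^ S.card * (if (∀ c ∈ S, bad c I) then 1 else 0) := Finset.sum_comm
    _ = ∑ S ∈ A.powerset, (-1 : ℤ) ^ S.card *
          ((X.filter (fun I => ∀ c ∈ S, bad c I)).card : ℤ) := by
        refine Finset.sum_congr rfl fun S _ => ?_
        rw [← Finset.mul_sum]
        congr 1
        exact (hcard _ inferInstance).symm

end Aux
/-- Inclusion–exclusion identity: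
`|SP((Π|L) ∪ U)| = Σ_{i=0}^{n} (−1)^i Σ_{Γ ∈ Λ_i(Π)} |SP(Π|(L ∪ B(Γ)))|`,
where `U` is the set of all unsupported constraints of `Π` and `n = |cycles(Π)|`;
in other words, `|SP((Π|L) ∪ U)|` equals the incremental count `a_n^L`. -/
theorem inclusion_exclusion_supported (V : Type*) (P : ASPProgram V)
    (L : Finset (ASPLit V)) (hover : litsOver P L) (hcons : consistentLits L) :
    ((SP (assumeP P L ∪ (cyclesF P).image (unsupC P))).ncard : ℤ) =
      ∑ i ∈ Finset.range ((cyclesF P).card + 1), (-1 : ℤ) ^ i *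
        ∑ Γ ∈ Lam P i, ((SP (assumeP P (L ∪ bodyLits Γ))).ncard : ℤ) := by
  classical
  set Q := assumeP P L with hQdef
  set A := cyclesF P with hAdef
  set X := (progAtoms Q).powerset.filter (fun I => isSupported Q I) with hXdef
  set bad : Finset V → Finset V → Prop :=
    fun C I => C ⊆ I ∧ ∀ s ∈ extSupport P C, s ∉ I with hbad
  have hconv : ∀ (R : ASPProgram V),
      (∀ r ∈ R, r.head = none ∧ ruleAtoms r ⊆ progAtoms Q) →
      ∀ (Y : Finset (Finset V)),
      (∀ I, I ∈ Y ↔ (isSupported Q I ∧ ∀ r ∈ R, ruleSat I r)) →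
      (SP (Q ∪ R)).ncard = Y.card := by
    intro R hR Y hY
    have hset : SP (Q ∪ R) = ↑Y := by
      ext I
      rw [Finset.mem_coe, hY I]
      exact isSupported_union_constraints Q R hR I
    rw [hset, Set.ncard_coe_finset]
  have hL : (SP (Q ∪ A.image (unsupC P))).ncard
      = (X.filter (fun I => ∀ C ∈ A, ¬ bad C I)).card := by
    have h1 : ∀ r ∈ A.image (unsupC P), r.head = none ∧ ruleAtoms r ⊆ progAtoms Q := by
      intro r hr
      obtain ⟨C, hC, rfl⟩ := Finset.mem_image.mp hr
      refine ⟨rfl, ?_⟩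
      intro a ha
      simp only [ruleAtoms, unsupC, Finset.mem_union] at ha
      rcases ha with (ha | ha) | ha
      · simp [Option.toFinset] at ha
      · exact progAtoms_subset_assumeP P L (cyclesF_subset_atoms hC ha)
      · exact progAtoms_subset_assumeP P L (extSupport_subset_atoms P C ha)
    have h2 : ∀ I : Finset V, (∀ r ∈ A.image (unsupC P), ruleSat I r) ↔ (∀ C ∈ A, ¬ bad C I) := by
      intro I
      constructor
      · intro h C hC hbadC
        exact ((ruleSat_none rfl).mp (h _ (Finset.mem_image_of_mem _ hC))) hbadC
      · intro h r hr
        obtain ⟨C, hC, rfl⟩ := Finset.mem_image.mp hr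
        exact (ruleSat_none rfl).mpr (h C hC)
    refine hconv _ h1 _ fun I => ?_
    rw [Finset.mem_filter, hXdef, Finset.mem_filter, Finset.mem_powerset]
    constructor
    · rintro ⟨⟨_, hs⟩, hp⟩
      exact ⟨hs, (h2 I).mpr hp⟩
    · rintro ⟨hs, hp⟩
      exact ⟨⟨hs.1.1, hs⟩, (h2 I).mp hp⟩
  have hRS : ∀ S ∈ A.powerset,
      (SP (assumeP P (L ∪ bodyLits (S.image (unsupC P))))).ncard
        = (X.filter (fun I => ∀ C ∈ S, bad C I)).card := by
    intro S hS
    have hSsub : S ⊆ A := Finset.mem_powerset.mp hS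
    have hsplit : assumeP P (L ∪ bodyLits (S.image (unsupC P)))
        = Q ∪ (bodyLits (S.image (unsupC P))).image ic := by
      simp only [assumeP, hQdef, Finset.image_union, Finset.union_assoc]
    rw [hsplit]
    have h1 : ∀ r ∈ (bodyLits (S.image (unsupC P))).image ic,
        r.head = none ∧ ruleAtoms r ⊆ progAtoms Q := by
      intro r hr
      obtain ⟨ℓ, hℓ, rfl⟩ := Finset.mem_image.mp hr
      refine ⟨ic_head_none ℓ, ?_⟩
      rw [ruleAtoms_ic]
      intro a ha
      rw [Finset.mem_singleton] at ha
      subst ha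
      exact progAtoms_subset_assumeP P L (bodyLits_atoms hSsub hℓ)
    have h2 : ∀ I : Finset V, (∀ r ∈ (bodyLits (S.image (unsupC P))).image ic, ruleSat I r) ↔
        (∀ C ∈ S, bad C I) := by
      intro I
      constructor
      · intro h
        exact (litSat_bodyLits P S I).mp
          (fun ℓ hℓ => (ruleSat_ic I ℓ).mp (h _ (Finset.mem_image_of_mem _ hℓ)))
      · intro h r hr
        obtain ⟨ℓ, hℓ, rfl⟩ := Finset.mem_image.mp hr
        exact (ruleSat_ic I ℓ).mpr ((litSat_bodyLits P S I).mpr h ℓ hℓ)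
    refine hconv _ h1 _ fun I => ?_
    rw [Finset.mem_filter, hXdef, Finset.mem_filter, Finset.mem_powerset]
    constructor
    · rintro ⟨⟨_, hs⟩, hp⟩
      exact ⟨hs, (h2 I).mpr hp⟩
    · rintro ⟨hs, hp⟩
      exact ⟨⟨hs.1.1, hs⟩, (h2 I).mp hp⟩
  have hLam : ∀ i, ∑ Γ ∈ Lam P i, ((SP (assumeP P (L ∪ bodyLits Γ))).ncard : ℤ)
      = ∑ S ∈ A.powersetCard i, ((X.filter (fun I => ∀ C ∈ S, bad C I)).card : ℤ) := by
    intro i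
    simp only [Lam, ← hAdef]
    rw [Finset.sum_image (fun S _ S' _ h => Finset.image_injective (unsupC_injective P) h)]
    refine Finset.sum_congr rfl fun S hS => ?_
    rw [hRS S (Finset.mem_powerset.mpr (Finset.mem_powersetCard.mp hS).1)]
  rw [hL]
  calc ((X.filter (fun I => ∀ C ∈ A, ¬ bad C I)).card : ℤ)
      = ∑ S ∈ A.powerset, (-1 : ℤ) ^ S.card *
          ((X.filter (fun I => ∀ C ∈ S, bad C I)).card : ℤ) := incl_excl_card X A bad
    _ = ∑ i ∈ Finset.range (A.card + 1), ∑ S ∈ A.powersetCard i, (-1 : ℤ) ^ S.card *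
          ((X.filter (fun I => ∀ C ∈ S, bad C I)).card : ℤ) := by
        rw [Finset.powerset_card_disjiUnion]; exact Finset.sum_disjiUnion ..
    _ = ∑ i ∈ Finset.range (A.card + 1), (-1 : ℤ) ^ i *
          ∑ S ∈ A.powersetCard i, ((X.filter (fun I => ∀ C ∈ S, bad C I)).card : ℤ) := by
        refine Finset.sum_congr rfl fun i _ => ?_
        rw [Finset.mul_sum]
        refine Finset.sum_congr rfl fun S hS => ?_
        rw [(Finset.mem_powersetCard.mp hS).2]
    _ = ∑ i ∈ Finset.range (A.card + 1), (-1 : ℤ) ^ i *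
          ∑ Γ ∈ Lam P i, ((SP (assumeP P (L ∪ bodyLits Γ))).ncard : ℤ) := by
        refine Finset.sum_congr rfl fun i _ => ?_
        rw [hLam i]
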